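/- Let T = ⟨π_1, π_2, …, π_h⟩ be a tangle (a sequence of permutations of [n] in which consecutive permutations are adjacent), and let L(T) = (l_{ij}) where l_{ij} counts the number of indices t < h such that π_t and π_{t+1} differ in the swap (i,j). Then π_1 L(T) = π_h, where for a permutation π and list L = (l_{ij}), the map πL sends i to π(i) + |{j : π(i) < π(j) ≤ n and l_{ij} odd}| − |{j : 1 ≤ π(j) < π(i) and l_{ij} odd}|. -/
import Mathlib

open Finset

/-- Two permutations are adjacent if every element's position changes by at most one. -/
def Adjacent {n : ℕ} (π σ : Equiv.Perm (Fin n)) : Prop :=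
  ∀ i, ((π i : ℤ) - (σ i : ℤ)).natAbs ≤ 1

/-- Number of times wires `i` and `j` swap in the sequence `T` of height `h`. -/
def SwapCount {n : ℕ} (T : ℕ → Equiv.Perm (Fin n)) (h : ℕ) (i j : Fin n) : ℕ :=
  ((Finset.range (h - 1)).filter fun t => T t i = T (t+1) j ∧ T t j = T (t+1) i).card

/-- A tangle of height `h`: a nonempty sequence of permutations with consecutive ones adjacent. -/
def IsTangle {n : ℕ} (T : ℕ → Equiv.Perm (Fin n)) (h : ℕ) : Prop :=
  1 ≤ h ∧ ∀ t, t + 1 < h → Adjacent (T t) (T (t+1))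

/-- A tangle starting at the identity realizing the list `l`. -/
def Realizes {n : ℕ} (T : ℕ → Equiv.Perm (Fin n)) (h : ℕ) (l : Fin n → Fin n → ℕ) : Prop :=
  IsTangle T h ∧ T 0 = 1 ∧ ∀ i j, i ≠ j → SwapCount T h i j = l i j

/-- A list is feasible if some tangle starting at the identity realizes it. -/
def Feasible {n : ℕ} (l : Fin n → Fin n → ℕ) : Prop :=
  ∃ h T, Realizes T h l

/-- A list is consistent if the map `id_n L` is a permutation of `[n]`. -/
def Consistent {n : ℕ} (l : Fin n → Fin n → ℕ) : Prop :=
  ∃ ρ : Equiv.Perm (Fin n), ∀ i : Fin n,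
    ((i : ℤ) + ((Finset.univ.filter fun j => i < j ∧ Odd (l i j)).card : ℤ)
      - ((Finset.univ.filter fun j => j < i ∧ Odd (l i j)).card : ℤ)) = (ρ i : ℤ)

lemma flips_parity (F : ℕ → Bool) (m : ℕ) :
    Odd ((Finset.range m).filter (fun t => F t ≠ F (t+1))).card ↔ F 0 ≠ F m := by
  induction m with
  | zero => simp
  | succ m ih =>
    rw [Finset.range_add_one, Finset.filter_insert]
    by_cases hm : F m = F (m+1)
    · rw [if_neg (by simp [hm]), ih, hm]
    · rw [if_pos hm, Finset.card_insert_of_notMem (by simp),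
        Nat.odd_add_one, Nat.not_odd_iff_even, ← Nat.not_odd_iff_even, ih]
      cases hb0 : F 0 <;> cases hbm : F m <;> cases hbm1 : F (m+1) <;> simp_all

lemma step_swap_iff {n : ℕ} (π σ : Equiv.Perm (Fin n)) (hadj : Adjacent π σ)
    {i j : Fin n} (hij : i ≠ j) :
    (π i = σ j ∧ π j = σ i) ↔ ¬((π i < π j) ↔ (σ i < σ j)) := by
  have h1 := hadj i
  have h2 := hadj j
  have e1 : (π i).val ≠ (π j).val := fun h => hij (π.injective (Fin.ext h))
  have e2 : (σ i).val ≠ (σ j).val := fun h => hij (σ.injective (Fin.ext h))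
  simp only [Fin.ext_iff, Fin.lt_iff_val_lt_val] at *
  omega

lemma odd_swapCount {n h : ℕ} (T : ℕ → Equiv.Perm (Fin n)) (hT : IsTangle T h)
    {i j : Fin n} (hij : i ≠ j) :
    Odd (SwapCount T h i j) ↔
      ¬((T 0 i < T 0 j) ↔ (T (h-1) i < T (h-1) j)) := by
  unfold SwapCount
  have hfe : ((Finset.range (h-1)).filter fun t => T t i = T (t+1) j ∧ T t j = T (t+1) i)
      = (Finset.range (h-1)).filter
          fun t => decide (T t i < T t j) ≠ decide (T (t+1) i < T (t+1) j) := by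
    apply Finset.filter_congr
    intro t ht
    simp only [Finset.mem_range] at ht
    rw [step_swap_iff (T t) (T (t+1)) (hT.2 t (by omega)) hij]
    simp [decide_eq_decide]
  rw [hfe, flips_parity (fun t => decide (T t i < T t j)) (h-1)]
  simp [decide_eq_decide]

lemma perm_val_eq_card {n : ℕ} (π : Equiv.Perm (Fin n)) (i : Fin n) :
    ((π i : ℤ)) = ∑ j : Fin n, if π j < π i then (1:ℤ) else 0 := by
  rw [Finset.sum_boole]
  congr 1
  have himg : (Finset.univ.filter fun j => π j < π i)
      = (Finset.univ.filter fun b => b < π i).map π.symm.toEmbedding := by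
    ext j
    simp [Equiv.symm_apply_eq, eq_comm]
  rw [himg, Finset.card_map]
  have : (Finset.univ.filter fun b : Fin n => b < π i) = Finset.Iio (π i) := by
    ext b; simp
  rw [this, Fin.card_Iio]

/-- For every tangle T = ⟨π₁,…,π_h⟩ we have π₁ L(T) = π_h. -/
theorem first_apply_list_eq_last (n h : ℕ) (T : ℕ → Equiv.Perm (Fin n))
    (hT : IsTangle T h) (i : Fin n) :
    ((T 0 i : ℤ)
      + ((Finset.univ.filter fun j => T 0 i < T 0 j ∧ Odd (SwapCount T h i j)).card : ℤ)
      - ((Finset.univ.filter fun j => T 0 j < T 0 i ∧ Odd (SwapCount T h i j)).card : ℤ))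
      = (T (h - 1) i : ℤ) := by
  rw [perm_val_eq_card (T 0) i, perm_val_eq_card (T (h-1)) i,
    ← Finset.sum_boole (p := fun j => T 0 i < T 0 j ∧ Odd (SwapCount T h i j)),
    ← Finset.sum_boole (p := fun j => T 0 j < T 0 i ∧ Odd (SwapCount T h i j)),
    ← Finset.sum_add_distrib, ← Finset.sum_sub_distrib]
  refine Finset.sum_congr rfl fun j _ => ?_
  by_cases hji : j = i
  · subst hji; simp
  · have hij : i ≠ j := Ne.symm hji
    have hp := odd_swapCount T hT hij
    have e0 : (T 0 i).val ≠ (T 0 j).val := fun h' => hij ((T 0).injective (Fin.ext h'))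
    have e1 : (T (h-1) i).val ≠ (T (h-1) j).val :=
      fun h' => hij ((T (h-1)).injective (Fin.ext h'))
    by_cases hO : Odd (SwapCount T h i j)
    · have hflip := hp.mp hO
      simp only [hO, and_true, Fin.lt_iff_val_lt_val] at *
      by_cases h0 : (T 0 j).val < (T 0 i).val <;>
        by_cases h1 : (T (h-1) j).val < (T (h-1) i).val <;>
        simp [h0, h1] <;> omega
    · have hsame : (T 0 i < T 0 j) ↔ (T (h-1) i < T (h-1) j) :=
        not_not.mp (fun hn => hO (hp.mpr hn))
      simp only [hO, and_false, Fin.lt_iff_val_lt_val] at *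
      by_cases h0 : (T 0 j).val < (T 0 i).val <;>
        by_cases h1 : (T (h-1) j).val < (T (h-1) i).val <;>
        simp [h0, h1] <;> omega
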